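/- Let G be a finite group, q a prime power with q = p^r, and fix an embedding of Z_q into C. For an element u ∈ G of p-power order and an irreducible complex representation L of the centralizer Z_G(u), define χ_{(u,L)}(E) = (1/dim L) Σ_{g ∈ Z_G(u)} trace(u | E_g) · trace(g | L) for E a conjugation-equivariant virtual complex vector bundle on G. Then χ_{(u,L)} is a ring homomorphism from the ring of conjugation-equivariant virtual vector bundles on G (with pointwise tensor product) to C. -/

import Mathlib

noncomputable section

open CategoryTheory

/-- A conjugation-equivariant complex vector bundle on a finite group `G`: a representation
`ρ` of `G` on a finite-dimensional space `V` (the total space of sections) together with an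
equivariant decomposition of `V` into fibers, recorded by a complete orthogonal family of
idempotents `π g` (projection onto the fiber at `g`) satisfying
`ρ h ∘ π g = π (hgh⁻¹) ∘ ρ h`.  The fiber at `g` is a representation of the centralizer
`Z_G(g)`. -/
structure ConjBundle (G : Type) [Group G] [Fintype G] where
  V : Type
  [ac : AddCommGroup V]
  [mod : Module ℂ V]
  [fd : FiniteDimensional ℂ V]
  ρ : Representation ℂ G V
  π : G → (V →ₗ[ℂ] V)
  idem : ∀ g, π g ∘ₗ π g = π g
  orth : ∀ g h, g ≠ h → π g ∘ₗ π h = 0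
  total : ∑ g : G, π g = LinearMap.id
  equivar : ∀ h g, ρ h ∘ₗ π g = π (h * g * h⁻¹) ∘ₗ ρ h

attribute [instance] ConjBundle.ac ConjBundle.mod ConjBundle.fd

/-- The character `χ_{(u,L)}` of the pair of an element `u ∈ G` and a representation `L` of
its centralizer, evaluated on a conjugation-equivariant vector bundle `B`:
`χ_{(u,L)}(B) = (1/dim L) Σ_{g ∈ Z_G(u)} trace(u | B_g) · trace(g | L)`,
where `trace(u | B_g) = trace(ρ_B(u) ∘ π_B(g))`. -/
def chiUL {G : Type} [Group G] [Fintype G] (u : G)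
    (L : FDRep ℂ ↥(Subgroup.centralizer ({u} : Set G))) (B : ConjBundle G) : ℂ :=
  (Module.finrank ℂ L : ℂ)⁻¹ *
    ∑ᶠ g : ↥(Subgroup.centralizer ({u} : Set G)),
      LinearMap.trace ℂ B.V (B.ρ u ∘ₗ B.π (g : G)) * FDRep.character L g

section Aux

open Module

lemma finrank_ne_zero_of_simple {H : Type} [Group H] (L : FDRep ℂ H) (hL : Simple L) :
    (Module.finrank ℂ L : ℂ) ≠ 0 := by
  have hnt : Nontrivial L := by
    rcases subsingleton_or_nontrivial L with h | h
    · exfalso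
      apply CategoryTheory.id_nonzero L
      apply Action.hom_ext
      refine FGModuleCat.hom_ext (LinearMap.ext ?_)
      intro x
      exact h.elim _ _
    · exact h
  haveI := hnt
  have : 0 < Module.finrank ℂ L := Module.finrank_pos
  exact_mod_cast this.ne'

lemma trace_vanish {G : Type} [Group G] [Fintype G] (u : G) (B : ConjBundle G) (a : G)
    (ha : a ∉ Subgroup.centralizer ({u} : Set G)) :
    LinearMap.trace ℂ B.V (B.ρ u ∘ₗ B.π a) = 0 := by
  have hne : a ≠ u * a * u⁻¹ := by
    intro h
    apply ha
    rw [Subgroup.mem_centralizer_iff]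
    rintro g hg
    rw [Set.mem_singleton_iff] at hg
    subst hg
    have h' : g * a * g⁻¹ = a := h.symm
    calc g * a = (g * a * g⁻¹) * g := by group
    _ = a * g := by rw [h']
  calc LinearMap.trace ℂ B.V (B.ρ u ∘ₗ B.π a)
      = LinearMap.trace ℂ B.V ((B.ρ u ∘ₗ B.π a) ∘ₗ B.π a) := by
        rw [LinearMap.comp_assoc, B.idem]
    _ = LinearMap.trace ℂ B.V (B.π a ∘ₗ (B.ρ u ∘ₗ B.π a)) := by
        rw [LinearMap.trace_comp_comm']
    _ = LinearMap.trace ℂ B.V (B.π a ∘ₗ (B.π (u * a * u⁻¹) ∘ₗ B.ρ u)) := by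
        rw [B.equivar]
    _ = 0 := by
        rw [← LinearMap.comp_assoc, B.orth a _ hne, LinearMap.zero_comp, map_zero]

lemma trace_conj_pi {G : Type} [Group G] [Fintype G] (u : G) (B : ConjBundle G) (h a : G)
    (hh : h ∈ Subgroup.centralizer ({u} : Set G)) :
    LinearMap.trace ℂ B.V (B.ρ u ∘ₗ B.π (h * a * h⁻¹)) =
      LinearMap.trace ℂ B.V (B.ρ u ∘ₗ B.π a) := by
  have huh : u * h = h * u := by
    rw [Subgroup.mem_centralizer_iff] at hh
    exact hh u rfl
  have hco : B.ρ h * B.ρ h⁻¹ = 1 := by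
    rw [← map_mul, mul_inv_cancel, map_one]
  have hpi : B.π (h * a * h⁻¹) = B.ρ h * B.π a * B.ρ h⁻¹ := by
    have h1 := B.equivar h a
    rw [← Module.End.mul_eq_comp, ← Module.End.mul_eq_comp] at h1
    calc B.π (h * a * h⁻¹) = B.π (h * a * h⁻¹) * (B.ρ h * B.ρ h⁻¹) := by
          rw [hco, mul_one]
      _ = (B.π (h * a * h⁻¹) * B.ρ h) * B.ρ h⁻¹ := (mul_assoc _ _ _).symm
      _ = (B.ρ h * B.π a) * B.ρ h⁻¹ := by rw [← h1]
  have key : B.ρ u ∘ₗ B.π (h * a * h⁻¹) = (B.ρ u * B.ρ h * B.π a) * B.ρ h⁻¹ := by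
    rw [← Module.End.mul_eq_comp, hpi, mul_assoc, mul_assoc, mul_assoc]
  rw [key, LinearMap.trace_mul_comm]
  have h2 : B.ρ h⁻¹ * (B.ρ u * B.ρ h * B.π a) = (B.ρ h⁻¹ * B.ρ u * B.ρ h) * B.π a := by
    rw [mul_assoc, mul_assoc, mul_assoc]
  rw [h2, ← map_mul, ← map_mul]
  have h3 : h⁻¹ * u * h = u := by
    rw [mul_assoc, huh, ← mul_assoc, inv_mul_cancel, one_mul]
  rw [h3, Module.End.mul_eq_comp]

lemma schur_conv {H : Type} [Group H] [Fintype H] (L : FDRep ℂ H) (hL : Simple L) (f : H → ℂ)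
    (hf : ∀ h a : H, f (h * a * h⁻¹) = f a) (a : H) :
    ∑ b : H, f b * L.character (a * b) =
      ((Module.finrank ℂ L : ℂ)⁻¹ * ∑ b : H, f b * L.character b) * L.character a := by
  classical
  have hd := finrank_ne_zero_of_simple L hL
  set z : L →ₗ[ℂ] L := ∑ b : H, f b • (L.ρ b : L →ₗ[ℂ] L) with hz
  have hcomm : ∀ h : H, (L.ρ h : L →ₗ[ℂ] L) * z = z * L.ρ h := by
    intro h
    rw [hz, Finset.mul_sum, Finset.sum_mul]
    refine Fintype.sum_equiv (MulAut.conj h).toEquiv _ _ ?_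
    intro x
    have hx : f (h * x * h⁻¹) = f x := hf h x
    simp only [MulAut.conj_apply, MulEquiv.toEquiv_eq_coe, EquivLike.coe_coe]
    rw [mul_smul_comm, smul_mul_assoc, ← map_mul, ← map_mul, hx]
    have hg : h * x * h⁻¹ * h = h * x := by group
    rw [hg]
  let φ : L ⟶ L := ⟨FGModuleCat.ofHom z, fun g => FGModuleCat.hom_ext (hcomm g).symm⟩
  obtain ⟨c, hc⟩ := CategoryTheory.endomorphism_simple_eq_smul_id (𝕜 := ℂ) φ
  have hz2 : z = c • LinearMap.id := by
    have h1 := congrArg Action.Hom.hom hc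
    rw [Action.smul_hom] at h1
    exact (congrArg (fun f => f.hom.hom) h1).symm
  have htr : LinearMap.trace ℂ L z = ∑ b : H, f b * L.character b := by
    rw [hz, map_sum]
    apply Finset.sum_congr rfl
    intro b _
    rw [map_smul, smul_eq_mul]
    rfl
  have htr2 : LinearMap.trace ℂ L z = c * (Module.finrank ℂ L : ℂ) := by
    rw [hz2, map_smul, LinearMap.trace_id, smul_eq_mul]
  have hc' : (Module.finrank ℂ L : ℂ)⁻¹ * ∑ b : H, f b * L.character b = c := by
    rw [← htr, htr2, mul_comm c, inv_mul_cancel_left₀ hd]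
  rw [hc']
  have hmul : (L.ρ a : L →ₗ[ℂ] L) * z = ∑ b : H, f b • (L.ρ (a * b) : L →ₗ[ℂ] L) := by
    rw [hz, Finset.mul_sum]
    apply Finset.sum_congr rfl
    intro b _
    rw [mul_smul_comm, ← map_mul]
  have h1 : ∑ b : H, f b * L.character (a * b)
      = LinearMap.trace ℂ L ((L.ρ a : L →ₗ[ℂ] L) * z) := by
    rw [hmul, map_sum]
    apply Finset.sum_congr rfl
    intro b _
    rw [map_smul, smul_eq_mul]
    rfl
  rw [h1, hz2]
  have hmo : (L.ρ a : L →ₗ[ℂ] L) * (c • LinearMap.id) = c • (L.ρ a : L →ₗ[ℂ] L) := by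
    rw [mul_smul_comm, ← Module.End.one_eq_id, mul_one]
  rw [hmo, map_smul, smul_eq_mul]
  rfl

lemma sum_subtype_ite {G : Type} [Group G] [Fintype G] [DecidableEq G]
    (H : Subgroup G) [DecidablePred (· ∈ H)] (F : ↥H → ℂ) (c : G) :
    ∑ g : ↥H, (if c = ↑g then F g else 0) =
      if h : c ∈ H then F ⟨c, h⟩ else 0 := by
  by_cases h : c ∈ H
  · rw [dif_pos h, Finset.sum_eq_single (⟨c, h⟩ : ↥H)]
    · rw [if_pos rfl]
    · intro b _ hb
      rw [if_neg]
      intro e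
      exact hb (Subtype.ext e.symm)
    · intro habs
      exact absurd (Finset.mem_univ _) habs
  · rw [dif_neg h]
    apply Finset.sum_eq_zero
    intro b _
    rw [if_neg]
    intro e
    exact h (e ▸ b.2)

lemma sum_eq_sum_subtype {G : Type} [Group G] [Fintype G] [DecidableEq G]
    (H : Subgroup G) [DecidablePred (· ∈ H)] (f : G → ℂ) (hf : ∀ b ∉ H, f b = 0) :
    ∑ b : G, f b = ∑ b : ↥H, f ↑b := by
  classical
  rw [← Finset.sum_filter_of_ne (p := (· ∈ H))
    (fun x _ hx => by by_contra hm; exact hx (hf x hm))]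
  exact Finset.sum_subtype _ (by simp) f

/-- The combinatorial core of multiplicativity. -/
lemma conv_core {G : Type} [Group G] [Fintype G] [DecidableEq G] (H : Subgroup G)
    [DecidablePred (· ∈ H)] (tB tC : G → ℂ) (χ : ↥H → ℂ) (d : ℂ)
    (hB : ∀ b ∉ H, tB b = 0) (hC : ∀ b ∉ H, tC b = 0)
    (hconv : ∀ a : ↥H, ∑ b : ↥H, tC ↑b * χ (a * b) = (d⁻¹ * ∑ b : ↥H, tC ↑b * χ b) * χ a) :
    d⁻¹ * ∑ g : ↥H, (∑ x : G × G, if x.1 * x.2 = ↑g then tB x.1 * tC x.2 else 0) * χ g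
      = (d⁻¹ * ∑ g : ↥H, tB ↑g * χ g) * (d⁻¹ * ∑ g : ↥H, tC ↑g * χ g) := by
  classical
  set Xe : G → ℂ := fun a => if h : a ∈ H then χ ⟨a, h⟩ else 0 with hXe
  have Xe_coe : ∀ b : ↥H, Xe ↑b = χ b := by
    intro b
    simp only [hXe]
    rw [dif_pos b.2]
  set cC : ℂ := d⁻¹ * ∑ b : ↥H, tC ↑b * χ b with hcC
  have convG : ∀ a : G, ∑ b : G, tC b * Xe (a * b) = cC * Xe a := by
    intro a
    by_cases ha : a ∈ H
    · rw [sum_eq_sum_subtype H _ (fun b hb => by rw [hC b hb, zero_mul])]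
      have step : ∑ b : ↥H, tC ↑b * Xe (a * ↑b)
          = ∑ b : ↥H, tC ↑b * χ ((⟨a, ha⟩ : ↥H) * b) := by
        apply Finset.sum_congr rfl
        intro b _
        congr 1
        have hab : a * ↑b = ↑((⟨a, ha⟩ : ↥H) * b) := rfl
        rw [hab, Xe_coe]
      rw [step, hconv ⟨a, ha⟩]
      congr 1
      simp only [hXe]
      rw [dif_pos ha]
    · have h0 : Xe a = 0 := by simp only [hXe]; rw [dif_neg ha]
      rw [h0, mul_zero]
      apply Finset.sum_eq_zero
      intro b _
      by_cases hb : b ∈ H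
      · have hab : a * b ∉ H := by
          intro hm
          exact ha (by simpa using H.mul_mem hm (H.inv_mem hb))
        have : Xe (a * b) = 0 := by simp only [hXe]; rw [dif_neg hab]
        rw [this, mul_zero]
      · rw [hC b hb, zero_mul]
  have main : ∑ g : ↥H, (∑ x : G × G, if x.1 * x.2 = ↑g then tB x.1 * tC x.2 else 0) * χ g
      = cC * ∑ g : ↥H, tB ↑g * χ g := by
    calc ∑ g : ↥H, (∑ x : G × G, if x.1 * x.2 = ↑g then tB x.1 * tC x.2 else 0) * χ g
        = ∑ g : ↥H, ∑ x : G × G,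
            (if x.1 * x.2 = ↑g then tB x.1 * tC x.2 * χ g else 0) := by
          apply Finset.sum_congr rfl
          intro g _
          rw [Finset.sum_mul]
          apply Finset.sum_congr rfl
          intro x _
          rw [ite_mul, zero_mul]
      _ = ∑ x : G × G, ∑ g : ↥H,
            (if x.1 * x.2 = ↑g then tB x.1 * tC x.2 * χ g else 0) := Finset.sum_comm
      _ = ∑ x : G × G, tB x.1 * tC x.2 * Xe (x.1 * x.2) := by
          apply Finset.sum_congr rfl
          intro x _
          rw [sum_subtype_ite H (fun g => tB x.1 * tC x.2 * χ g) (x.1 * x.2)]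
          by_cases hx : x.1 * x.2 ∈ H
          · rw [dif_pos hx]
            simp only [hXe]
            rw [dif_pos hx]
          · rw [dif_neg hx]
            simp only [hXe]
            rw [dif_neg hx, mul_zero]
      _ = ∑ a : G, ∑ b : G, tB a * tC b * Xe (a * b) := by
          rw [← Finset.univ_product_univ, Finset.sum_product]
      _ = ∑ a : G, tB a * ∑ b : G, tC b * Xe (a * b) := by
          apply Finset.sum_congr rfl
          intro a _
          rw [Finset.mul_sum]
          apply Finset.sum_congr rfl
          intro b _
          ring
      _ = ∑ a : G, tB a * (cC * Xe a) := by
          apply Finset.sum_congr rfl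
          intro a _
          rw [convG a]
      _ = cC * ∑ a : G, tB a * Xe a := by
          rw [Finset.mul_sum]
          apply Finset.sum_congr rfl
          intro a _
          ring
      _ = cC * ∑ g : ↥H, tB ↑g * Xe ↑g := by
          congr 1
          exact sum_eq_sum_subtype H _ (fun b hb => by rw [hB b hb, zero_mul])
      _ = cC * ∑ g : ↥H, tB ↑g * χ g := by
          congr 1
          exact Finset.sum_congr rfl (fun g _ => by rw [Xe_coe])
  rw [main, hcC]
  ring

end Aux

/-- For `u ∈ G` of `p`-power order and `L` an irreducible complex representation
of `Z_G(u)`, the functional `χ_{(u,L)}` is a ring homomorphism from the Grothendieck ring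
`K_G(G)` of conjugation-equivariant virtual vector bundles on `G` to `ℂ`: it sends the unit
bundle to `1`, direct sums of bundles to sums, and products of bundles to products. -/
theorem chiUL_is_ring_hom
    (G : Type) [Group G] [Fintype G] [DecidableEq G]
    (p : ℕ) (hp : p.Prime)
    (u : G) (hu : ∃ k : ℕ, orderOf u = p ^ k)
    (L : FDRep ℂ ↥(Subgroup.centralizer ({u} : Set G))) (hL : Simple L) :
    -- χ sends the unit bundle (the fiber ℂ with trivial action, supported at 1) to 1
    (∀ D : ConjBundle G, (∀ g : G, g ≠ 1 → D.π g = 0) →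
      (∀ h : G, D.ρ h = LinearMap.id) → Module.finrank ℂ D.V = 1 →
      chiUL u L D = 1) ∧
    -- χ is additive on direct sums of bundles
    (∀ B C D : ConjBundle G, ∀ e : D.V ≃ₗ[ℂ] B.V × C.V,
      (∀ h : G, (e : D.V →ₗ[ℂ] B.V × C.V) ∘ₗ D.ρ h =
        ((B.ρ h).prodMap (C.ρ h)) ∘ₗ (e : D.V →ₗ[ℂ] B.V × C.V)) →
      (∀ g : G, (e : D.V →ₗ[ℂ] B.V × C.V) ∘ₗ D.π g =
        ((B.π g).prodMap (C.π g)) ∘ₗ (e : D.V →ₗ[ℂ] B.V × C.V)) →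
      chiUL u L D = chiUL u L B + chiUL u L C) ∧
    -- χ is multiplicative on products of bundles
    (∀ B C D : ConjBundle G, ∀ e : D.V ≃ₗ[ℂ] TensorProduct ℂ B.V C.V,
      (∀ h : G, (e : D.V →ₗ[ℂ] TensorProduct ℂ B.V C.V) ∘ₗ D.ρ h =
        (TensorProduct.map (B.ρ h) (C.ρ h)) ∘ₗ (e : D.V →ₗ[ℂ] TensorProduct ℂ B.V C.V)) →
      (∀ g : G, (e : D.V →ₗ[ℂ] TensorProduct ℂ B.V C.V) ∘ₗ D.π g =
        (∑ x : G × G, if x.1 * x.2 = g then TensorProduct.map (B.π x.1) (C.π x.2) else 0) ∘ₗ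
          (e : D.V →ₗ[ℂ] TensorProduct ℂ B.V C.V)) →
      chiUL u L D = chiUL u L B * chiUL u L C) := by
  classical
  have hd : (Module.finrank ℂ L : ℂ) ≠ 0 := finrank_ne_zero_of_simple L hL
  refine ⟨?_, ?_, ?_⟩
  · -- unit
    intro D h0 hρ hrk
    have hπ1 : D.π 1 = LinearMap.id := by
      have := D.total
      rwa [Finset.sum_eq_single 1 (fun b _ hb => h0 b hb)
        (fun habs => absurd (Finset.mem_univ _) habs)] at this
    rw [chiUL, finsum_eq_sum_of_fintype]
    have h1 : ∀ g : ↥(Subgroup.centralizer ({u} : Set G)),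
        LinearMap.trace ℂ D.V (D.ρ u ∘ₗ D.π ↑g) * L.character g
          = if (1 : ↥(Subgroup.centralizer ({u} : Set G))) = g
            then (Module.finrank ℂ L : ℂ) else 0 := by
      intro g
      by_cases hg : (g : G) = 1
      · have hg' : (1 : ↥(Subgroup.centralizer ({u} : Set G))) = g := Subtype.ext (by simp [hg])
        rw [if_pos hg', hρ u, LinearMap.id_comp, hg, hπ1, LinearMap.trace_id, hrk, ← hg',
          FDRep.char_one]
        norm_num
      · rw [if_neg (fun e => hg (by rw [← e]; rfl)),
          h0 _ hg, LinearMap.comp_zero, map_zero, zero_mul]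
    rw [Finset.sum_congr rfl (fun g _ => h1 g), Finset.sum_ite_eq]
    simp [inv_mul_cancel₀ hd]
  · -- additive
    intro B C D e he hπ
    have key : ∀ g : G, LinearMap.trace ℂ D.V (D.ρ u ∘ₗ D.π g)
        = LinearMap.trace ℂ B.V (B.ρ u ∘ₗ B.π g) + LinearMap.trace ℂ C.V (C.ρ u ∘ₗ C.π g) := by
      intro g
      have h1 : ∀ y, e (D.ρ u y) = (B.ρ u).prodMap (C.ρ u) (e y) := by
        intro y
        have := LinearMap.congr_fun (he u) y
        simpa using this
      have h2 : ∀ y, e (D.π g y) = (B.π g).prodMap (C.π g) (e y) := by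
        intro y
        have := LinearMap.congr_fun (hπ g) y
        simpa using this
      have hconj : e.conj (D.ρ u ∘ₗ D.π g) = (B.ρ u ∘ₗ B.π g).prodMap (C.ρ u ∘ₗ C.π g) := by
        rw [LinearEquiv.conj_apply]
        apply LinearMap.ext
        intro x
        simp only [LinearMap.comp_apply, LinearEquiv.coe_coe]
        rw [h1, h2, e.apply_symm_apply]
        simp [LinearMap.prodMap_apply]
      calc LinearMap.trace ℂ D.V (D.ρ u ∘ₗ D.π g)
          = LinearMap.trace ℂ (B.V × C.V) (e.conj (D.ρ u ∘ₗ D.π g)) :=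
            (LinearMap.trace_conj' _ e).symm
        _ = _ := by rw [hconj, LinearMap.trace_prodMap']
    rw [chiUL, chiUL, chiUL, finsum_eq_sum_of_fintype, finsum_eq_sum_of_fintype,
      finsum_eq_sum_of_fintype, ← mul_add, ← Finset.sum_add_distrib]
    congr 1
    apply Finset.sum_congr rfl
    intro g _
    rw [key, add_mul]
  · -- multiplicative
    intro B C D e he hπ
    have key : ∀ g : G, LinearMap.trace ℂ D.V (D.ρ u ∘ₗ D.π g)
        = ∑ x : G × G, (if x.1 * x.2 = g then
            LinearMap.trace ℂ B.V (B.ρ u ∘ₗ B.π x.1) *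
              LinearMap.trace ℂ C.V (C.ρ u ∘ₗ C.π x.2) else 0) := by
      intro g
      have h1 : ∀ y, e (D.ρ u y) = TensorProduct.map (B.ρ u) (C.ρ u) (e y) := by
        intro y
        have := LinearMap.congr_fun (he u) y
        simpa using this
      have h2 : ∀ y, e (D.π g y) =
          (∑ x : G × G, if x.1 * x.2 = g then
            TensorProduct.map (B.π x.1) (C.π x.2) else 0) (e y) := by
        intro y
        have := LinearMap.congr_fun (hπ g) y
        simpa using this
      have hconj : e.conj (D.ρ u ∘ₗ D.π g)
          = ∑ x : G × G, (if x.1 * x.2 = g then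
              TensorProduct.map (B.ρ u ∘ₗ B.π x.1) (C.ρ u ∘ₗ C.π x.2) else 0) := by
        rw [LinearEquiv.conj_apply]
        apply LinearMap.ext
        intro v
        simp only [LinearMap.comp_apply, LinearEquiv.coe_coe]
        rw [h1, h2, e.apply_symm_apply]
        rw [LinearMap.sum_apply, map_sum, LinearMap.sum_apply]
        apply Finset.sum_congr rfl
        intro x _
        by_cases hx : x.1 * x.2 = g
        · rw [if_pos hx, if_pos hx, TensorProduct.map_comp]
          rfl
        · rw [if_neg hx, if_neg hx, LinearMap.zero_apply, map_zero]
      calc LinearMap.trace ℂ D.V (D.ρ u ∘ₗ D.π g)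
          = LinearMap.trace ℂ (TensorProduct ℂ B.V C.V) (e.conj (D.ρ u ∘ₗ D.π g)) :=
            (LinearMap.trace_conj' _ e).symm
        _ = _ := by
            rw [hconj, map_sum]
            apply Finset.sum_congr rfl
            intro x _
            by_cases hx : x.1 * x.2 = g
            · rw [if_pos hx, if_pos hx, LinearMap.trace_tensorProduct']
            · rw [if_neg hx, if_neg hx, map_zero]
    have hclass : ∀ h b : ↥(Subgroup.centralizer ({u} : Set G)),
        (fun b : ↥(Subgroup.centralizer ({u} : Set G)) =>
          LinearMap.trace ℂ C.V (C.ρ u ∘ₗ C.π ↑b)) (h * b * h⁻¹)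
          = (fun b : ↥(Subgroup.centralizer ({u} : Set G)) =>
            LinearMap.trace ℂ C.V (C.ρ u ∘ₗ C.π ↑b)) b := by
      intro h b
      exact trace_conj_pi u C ↑h ↑b h.2
    have hconv := fun a => schur_conv L hL
      (fun b : ↥(Subgroup.centralizer ({u} : Set G)) =>
        LinearMap.trace ℂ C.V (C.ρ u ∘ₗ C.π ↑b)) hclass a
    rw [chiUL, chiUL, chiUL, finsum_eq_sum_of_fintype, finsum_eq_sum_of_fintype,
      finsum_eq_sum_of_fintype]
    rw [Finset.sum_congr rfl (fun g _ => by rw [key ↑g])]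
    exact conv_core (Subgroup.centralizer ({u} : Set G))
      (fun a => LinearMap.trace ℂ B.V (B.ρ u ∘ₗ B.π a))
      (fun a => LinearMap.trace ℂ C.V (C.ρ u ∘ₗ C.π a))
      L.character (Module.finrank ℂ L : ℂ)
      (fun b hb => trace_vanish u B b hb)
      (fun b hb => trace_vanish u C b hb)
      hconv


end
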